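/- For any sprawl (V, E, P, N) in a universe U and any workload (Q_i)_{i∈I} in U: (i) if the sprawl is responsible for the workload, then it is correct for the workload; (ii) if the sprawl is correct, then for every v ∈ V and every query Q_i with v ∈ Q_i there exists a hyperpath from ∅ to v all of whose edges e satisfy condition (R1), namely that Q_i intersects every region in P(e); consequently (iii) a correct sprawl in which N(e) = ∅ for every edge e is responsible. -/

import Mathlib

/-- A signed directed hypergraph. -/
structure SignedHyperdigraph (V : Type*) where
  E : Type
  finE : Finite E
  src : E → Set V
  tgt : E → V
  sign : E → Bool

namespace SignedHyperdigraph

/-- The traversal repertoire of a signed hyperdigraph. -/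
def repertoire {V : Type*} (G : SignedHyperdigraph V) : Set (List V) :=
  {τ | ∀ i : Fin τ.length,
    (τ.get i ∉ τ.take i.val) ∧
    (∃ e : G.E, G.sign e = true ∧ G.src e ⊆ {v | v ∈ τ.take i.val} ∧
      G.tgt e = τ.get i) ∧
    ¬ ∃ e : G.E, G.sign e = false ∧ G.src e ⊆ {v | v ∈ τ.take i.val} ∧
      G.tgt e = τ.get i}

end SignedHyperdigraph

/-- A sprawl in a universe `U` with ground set `V ⊆ U`. -/
structure Sprawl (U : Type*) (V : Set U) where
  E : Type
  finE : Finite E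
  src : E → Set V
  tgt : E → V
  P : E → Finset (Set U)
  N : E → Finset (Set U)

namespace Sprawl

variable {U : Type*} {V : Set U}

/-- The signed hyperdigraph induced on the ground set by a query `Q`. -/
def induced (S : Sprawl U V) (Q : Set U) : SignedHyperdigraph V where
  E := {p : S.E × Bool //
    (p.2 = true ∧ (∀ R ∈ S.P p.1, (Q ∩ R).Nonempty) ∧
      (∀ R ∈ S.N p.1, (Q ∩ R).Nonempty)) ∨
    (p.2 = false ∧ ∃ R ∈ S.N p.1, Q ∩ R = ∅)}
  finE := by
    have : Finite S.E := S.finE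
    infer_instance
  src := fun e => S.src e.val.1
  tgt := fun e => S.tgt e.val.1
  sign := fun e => e.val.2

/-- A set `Γ` of edges can be ordered into a sequence `e₁, …, e_k` (`k ≥ 1`,
distinct edges) with `src(eᵢ) ⊆ {tgt(eⱼ) : j < i}` for each `i` and
`tgt(e_k) = v`. -/
def Orderable (S : Sprawl U V) (Γ : Set S.E) (v : V) : Prop :=
  ∃ l : List S.E, l.Nodup ∧ {e | e ∈ l} = Γ ∧
    (∀ i : Fin l.length,
      S.src (l.get i) ⊆ {w | ∃ j : Fin l.length, j.val < i.val ∧ S.tgt (l.get j) = w}) ∧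
    (∃ e, l.getLast? = some e ∧ S.tgt e = v)

/-- A hyperpath from `∅` to `v`: a minimal finite set of edges that can be
ordered as above (no strict subset admits such an ordering). -/
def IsHyperpath (S : Sprawl U V) (Γ : Set S.E) (v : V) : Prop :=
  Γ.Finite ∧ Orderable S Γ v ∧ ∀ Γ' ⊂ Γ, ¬ Orderable S Γ' v

/-- The node set of a set of edges: all sources and targets of its edges. -/
def nodeSet (S : Sprawl U V) (Γ : Set S.E) : Set V :=
  (⋃ e ∈ Γ, S.src e) ∪ (S.tgt '' Γ)

/-- Correctness of a sprawl for a workload: for every query `Qᵢ` and every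
maximal traversal `τ` of the induced signed hyperdigraph, `Qᵢ ∩ V ⊆ τ̃`. -/
def Correct (S : Sprawl U V) {I : Type*} (Q : I → Set U) : Prop :=
  ∀ i (τ : List V), τ ∈ (S.induced (Q i)).repertoire →
    (¬ ∃ x : V, τ ++ [x] ∈ (S.induced (Q i)).repertoire) →
    ∀ v : V, (v : U) ∈ Q i → v ∈ τ

/-- Responsibility of a sprawl for a workload: for every node `v` and query
`Qᵢ` containing it, there is a hyperpath `Γ` from `∅` to `v`, with node set
`V′`, such that (R1) `Qᵢ` intersects every positive region of every edge of
`Γ`, and (R2) `Qᵢ` intersects every negative region of every edge whose target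
lies in `V′`. -/
def Responsible (S : Sprawl U V) {I : Type*} (Q : I → Set U) : Prop :=
  ∀ (v : V) (i : I), (v : U) ∈ Q i →
    ∃ Γ : Set S.E, IsHyperpath S Γ v ∧
      (∀ e ∈ Γ, ∀ R ∈ S.P e, (Q i ∩ R).Nonempty) ∧
      (∀ e' : S.E, S.tgt e' ∈ nodeSet S Γ → ∀ R' ∈ S.N e', (Q i ∩ R').Nonempty)

end Sprawl


section Helpers

open Classical

/-- Elements of the repertoire have no duplicates. -/
lemma rep_nodup' {W : Type*} {G : SignedHyperdigraph W} {τ : List W}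
    (h : τ ∈ G.repertoire) : τ.Nodup := by
  rw [List.nodup_iff_injective_get]
  intro i j hij
  by_contra hne
  rcases Nat.lt_or_ge i.val j.val with hlt | hge
  · have h2 : τ.get i ∈ τ.take j.val := by
      rw [show τ.get i = (τ.take j.val)[i.val]'(by simp; omega) by simp]; exact List.getElem_mem _
    rw [hij] at h2
    exact (h j).1 h2
  · have hlt : j.val < i.val := lt_of_le_of_ne hge (fun hh => hne (Fin.ext hh.symm))
    have h2 : τ.get j ∈ τ.take i.val := by
      rw [show τ.get j = (τ.take i.val)[j.val]'(by simp; omega) by simp]; exact List.getElem_mem _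
    rw [← hij] at h2
    exact (h i).1 h2

/-- The empty list is in every repertoire. -/
lemma rep_nil' {W : Type*} (G : SignedHyperdigraph W) :
    ([] : List W) ∈ G.repertoire := by
  intro i
  exact absurd i.isLt (by simp)

/-- Extending a traversal. -/
lemma rep_append' {W : Type*} {G : SignedHyperdigraph W} {τ : List W} {x : W}
    (hτ : τ ∈ G.repertoire) (hx : x ∉ τ)
    (hpos : ∃ e : G.E, G.sign e = true ∧ G.src e ⊆ {v | v ∈ τ} ∧ G.tgt e = x)
    (hneg : ¬ ∃ e : G.E, G.sign e = false ∧ G.src e ⊆ {v | v ∈ τ} ∧ G.tgt e = x) :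
    τ ++ [x] ∈ G.repertoire := by
  intro i
  have hi : i.val < τ.length + 1 := by simpa using i.isLt
  rcases Nat.lt_succ_iff_lt_or_eq.mp hi with h | h
  · have htake : (τ ++ [x]).take i.val = τ.take i.val :=
      List.take_append_of_le_length h.le
    have hget : (τ ++ [x]).get i = τ.get ⟨i.val, h⟩ := by
      simp [List.get_eq_getElem, List.getElem_append_left h]
    rw [htake, hget]
    exact hτ ⟨i.val, h⟩
  · have htake : (τ ++ [x]).take i.val = τ := by
      rw [h]; exact List.take_left
    have hget : (τ ++ [x]).get i = x := by
      simp [List.get_eq_getElem, List.getElem_concat_length h]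
    rw [htake, hget]
    exact ⟨hx, hpos, hneg⟩

/-- Every finite graph has a maximal traversal. -/
lemma exists_maximal_traversal' {W : Type*} [Fintype W] (G : SignedHyperdigraph W) :
    ∃ τ ∈ G.repertoire, ¬ ∃ x : W, τ ++ [x] ∈ G.repertoire := by
  set L : Set ℕ := {n | ∃ τ ∈ G.repertoire, τ.length = n} with hL
  have hne : L.Nonempty := ⟨0, [], rep_nil' G, rfl⟩
  have hbdd : BddAbove L := by
    refine ⟨Fintype.card W, fun n hn => ?_⟩
    obtain ⟨τ, hτ, rfl⟩ := hn
    exact (rep_nodup' hτ).length_le_card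
  obtain ⟨τ, hτ, hlen⟩ := Nat.sSup_mem hne hbdd
  refine ⟨τ, hτ, ?_⟩
  rintro ⟨x, hx⟩
  have hmem : τ.length + 1 ∈ L := ⟨τ ++ [x], hx, by simp⟩
  have := le_csSup hbdd hmem
  omega

namespace Sprawl

variable {U : Type} {V : Set U}

/-- Every orderable set contains a hyperpath. -/
lemma exists_hyperpath_subset (S : Sprawl U V) (v : V) :
    ∀ (n : ℕ) (Γ : Set S.E), Γ.ncard ≤ n → S.Orderable Γ v →
      ∃ Γ' ⊆ Γ, S.IsHyperpath Γ' v := by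
  have : Finite S.E := S.finE
  intro n
  induction n with
  | zero =>
    intro Γ hcard hord
    refine ⟨Γ, subset_rfl, Γ.toFinite, hord, fun Γ' hΓ' hord' => ?_⟩
    have := Set.ncard_lt_ncard hΓ' Γ.toFinite
    omega
  | succ m ih =>
    intro Γ hcard hord
    by_cases hmin : ∃ Γ' ⊂ Γ, S.Orderable Γ' v
    · obtain ⟨Γ', hsub, hord'⟩ := hmin
      have hlt := Set.ncard_lt_ncard hsub Γ.toFinite
      obtain ⟨Γ'', h1, h2⟩ := ih Γ' (by omega) hord'
      exact ⟨Γ'', h1.trans hsub.subset, h2⟩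
    · push_neg at hmin
      exact ⟨Γ, subset_rfl, Γ.toFinite, hord, hmin⟩

/-- Correct implies that R1-hyperpaths exist. -/
lemma correct_hyperpath (hVfin : V.Finite) (S : Sprawl U V)
    {I : Type} (Q : I → Set U) (hC : S.Correct Q) :
    ∀ (v : V) (i : I), (v : U) ∈ Q i →
      ∃ Γ : Set S.E, S.IsHyperpath Γ v ∧
        ∀ e ∈ Γ, ∀ R ∈ S.P e, (Q i ∩ R).Nonempty := by
  intro v i hv
  have : Fintype ↥V := hVfin.fintype
  obtain ⟨τ, hτ, hmax⟩ := exists_maximal_traversal' (S.induced (Q i))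
  have hvτ : v ∈ τ := hC i τ hτ hmax v hv
  obtain ⟨idx, hidx⟩ := List.mem_iff_get.mp hvτ
  have hch : ∀ j : Fin τ.length, ∃ e : S.E,
      S.src e ⊆ {w | w ∈ τ.take j.val} ∧ S.tgt e = τ.get j ∧
      (∀ R ∈ S.P e, (Q i ∩ R).Nonempty) := by
    intro j
    obtain ⟨ε, hsgn, hsrc, htgt⟩ := (hτ j).2.1
    rcases ε.2 with ⟨_, hP, _⟩ | ⟨hfalse, _⟩
    · exact ⟨ε.val.1, hsrc, htgt, hP⟩
    · exfalso
      have h2 : ε.val.2 = true := hsgn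
      rw [hfalse] at h2
      simp at h2
  choose f hfsrc hftgt hfP using hch
  have hcast : idx.val + 1 ≤ τ.length := idx.isLt
  obtain ⟨g, hgtgt, hgsrc, hgP⟩ :
      ∃ g : Fin (idx.val + 1) → S.E,
        (∀ k, S.tgt (g k) = τ.get (Fin.castLE hcast k)) ∧
        (∀ k, S.src (g k) ⊆ {w | w ∈ τ.take k.val}) ∧
        (∀ k, ∀ R ∈ S.P (g k), (Q i ∩ R).Nonempty) :=
    ⟨fun k => f (Fin.castLE hcast k), fun k => hftgt _, fun k => hfsrc _,
      fun k => hfP _⟩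
  have hginj : Function.Injective g := by
    intro k k' hkk
    have h1 : τ.get (Fin.castLE hcast k) = τ.get (Fin.castLE hcast k') := by
      rw [← hgtgt, ← hgtgt, hkk]
    exact Fin.castLE_injective hcast ((rep_nodup' hτ).get_inj_iff.mp h1)
  have hord : S.Orderable {e | e ∈ List.ofFn g} v := by
    refine ⟨List.ofFn g, List.nodup_ofFn.mpr hginj, rfl, ?_, ?_⟩
    · intro k w hw
      rw [List.get_ofFn] at hw
      have hmem := hgsrc (Fin.cast (by simp) k) hw
      obtain ⟨m, hm, hgm⟩ := List.mem_take_iff_getElem.mp hmem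
      have hmlt : m < k.val := lt_of_lt_of_le hm inf_le_left
      refine ⟨⟨m, lt_trans hmlt k.isLt⟩, hmlt, ?_⟩
      rw [List.get_ofFn, hgtgt]
      simpa [List.get_eq_getElem] using hgm
    · refine ⟨g ⟨idx.val, by omega⟩, ?_, ?_⟩
      · rw [List.getLast?_eq_getElem?]
        have hlen : (List.ofFn g).length = idx.val + 1 := by simp
        rw [List.getElem?_eq_getElem (by simp [hlen])]
        congr 1
        rw [List.getElem_ofFn]
        congr 1
        apply Fin.ext
        simp [hlen]
      · rw [hgtgt]
        have hEq : Fin.castLE hcast ⟨idx.val, by omega⟩ = idx := Fin.ext rfl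
        rw [hEq, hidx]
  obtain ⟨Γ', hsub, hpath⟩ :=
    exists_hyperpath_subset S v {e | e ∈ List.ofFn g}.ncard _ le_rfl hord
  refine ⟨Γ', hpath, ?_⟩
  intro e he R hR
  have hel : e ∈ List.ofFn g := hsub he
  rw [List.mem_ofFn] at hel
  obtain ⟨k, rfl⟩ := hel
  exact hgP _ R hR

end Sprawl

end Helpers

/-- Observation on responsibility and correctness: for any sprawl
and workload, (i) responsible implies correct; (ii) correct implies that for
every node `v` and query containing it there is a hyperpath from `∅` to `v`
all of whose edges satisfy (R1); consequently (iii) a correct sprawl with no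
negative regions is responsible. -/
theorem responsible_correct_relations
    {U : Type} {V : Set U} (hVfin : V.Finite) (hVne : V.Nonempty)
    {I : Type} (S : Sprawl U V) (Q : I → Set U) :
    (S.Responsible Q → S.Correct Q) ∧
    (S.Correct Q → ∀ (v : V) (i : I), (v : U) ∈ Q i →
      ∃ Γ : Set S.E, S.IsHyperpath Γ v ∧
        ∀ e ∈ Γ, ∀ R ∈ S.P e, (Q i ∩ R).Nonempty) ∧
    ((S.Correct Q ∧ ∀ e : S.E, S.N e = ∅) → S.Responsible Q) := by
  classical
  obtain ⟨partII⟩ : Nonempty (S.Correct Q → ∀ (v : V) (i : I), (v : U) ∈ Q i →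
      ∃ Γ : Set S.E, S.IsHyperpath Γ v ∧
        ∀ e ∈ Γ, ∀ R ∈ S.P e, (Q i ∩ R).Nonempty) :=
    ⟨fun hC => Sprawl.correct_hyperpath hVfin S Q hC⟩
  refine ⟨?_, partII, ?_⟩
  · -- (i) responsible implies correct
    intro hResp i τ hτ hmax v hv
    by_contra hvτ
    obtain ⟨Γ, ⟨hΓfin, ⟨l, hnd, hset, hsrcl, elast, hlast, htgtl⟩, _⟩, hR1, hR2⟩ :=
      hResp v i hv
    have hlne : l ≠ [] := by
      intro h; rw [h] at hlast; simp at hlast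
    have helast : elast = l.getLast hlne := by
      rw [List.getLast?_eq_getLast hlne] at hlast
      exact (Option.some_inj.mp hlast).symm
    have hex : ∃ j : ℕ, ∃ hj : j < l.length, S.tgt (l.get ⟨j, hj⟩) ∉ τ := by
      refine ⟨l.length - 1, Nat.sub_lt (List.length_pos_iff.mpr hlne) one_pos, ?_⟩
      rw [show l.get ⟨l.length - 1, Nat.sub_lt (List.length_pos_iff.mpr hlne) one_pos⟩ = l.getLast hlne from
        (List.getLast_eq_getElem hlne).symm, ← helast, htgtl]
      exact hvτ
    obtain ⟨hj, hxnot⟩ := Nat.find_spec hex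
    set e := l.get ⟨Nat.find hex, hj⟩ with he
    set x := S.tgt e with hxdef
    have heΓ : e ∈ Γ := by rw [← hset]; exact List.get_mem _ _
    have hxnode : S.tgt e ∈ S.nodeSet Γ := Or.inr ⟨e, heΓ, rfl⟩
    have hsrcτ : S.src e ⊆ {w | w ∈ τ} := by
      intro w hw
      obtain ⟨j', hj', htj'⟩ := hsrcl ⟨Nat.find hex, hj⟩ hw
      have hmem : S.tgt (l.get j') ∈ τ := by
        by_contra hcon
        exact Nat.find_min hex hj' ⟨j'.isLt, hcon⟩
      rwa [htj'] at hmem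
    apply hmax
    refine ⟨x, rep_append' hτ hxnot ?_ ?_⟩
    · exact ⟨⟨(e, true), Or.inl ⟨rfl, fun R hR => hR1 e heΓ R hR,
        fun R hR => hR2 e hxnode R hR⟩⟩, rfl, hsrcτ, rfl⟩
    · rintro ⟨e2, hsgn, hsrce2, htgte2⟩
      have h2 : e2.val.2 = false := hsgn
      rcases e2.2 with ⟨ht, _, _⟩ | ⟨_, R, hR, hQR⟩
      · rw [ht] at h2; simp at h2
      · have hmem : S.tgt e2.val.1 ∈ S.nodeSet Γ := by
          have h3 : S.tgt e2.val.1 = x := htgte2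
          rw [h3]; exact hxnode
        have := hR2 e2.val.1 hmem R hR
        rw [hQR] at this
        exact Set.not_nonempty_empty this
  · -- (iii)
    rintro ⟨hC, hN⟩ v i hv
    obtain ⟨Γ, hpath, hR1⟩ := partII hC v i hv
    refine ⟨Γ, hpath, hR1, fun e' _ R' hR' => ?_⟩
    rw [hN e'] at hR'
    exact absurd hR' (Finset.notMem_empty R')
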